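/- Let G be a pomonoid, C a symmetric monoidal category, and T a centralisable strong G-graded monad on C with terminal graded central cones (Z^z X, ι^z_X). For every z ∈ Z(G) and every morphism f : X → Y in C, there exists a unique morphism Z^z f : Z^z X → Z^z Y such that ι^z_Y ∘ Z^z f = T^z(f) ∘ ι^z_X; moreover, this assignment makes Z^z an endofunctor of C (preserving identities and composition) and makes ι^z : Z^z ⇒ T^z a natural transformation. -/

import Mathlib

open CategoryTheory MonoidalCategory

universe v u

variable (G : Type*) [Monoid G] [PartialOrder G] [MulLeftMono G] [MulRightMono G]
variable (C : Type u) [Category.{v} C]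

/-- A pomonoid-graded monad on a category `C`, graded by the pomonoid `G`
(a monoid with a partial order for which multiplication is monotone in both arguments). -/
structure GradedMonad where
  /-- the graded family of endofunctors -/
  T : G → C ⥤ C
  /-- the unit -/
  η : 𝟭 C ⟶ T 1
  /-- the graded multiplication; `(μ a b).app X : T^a (T^b X) ⟶ T^{a*b} X` -/
  μ : ∀ a b : G, T b ⋙ T a ⟶ T (a * b)
  /-- the order natural transformations `T^{a ≤ a'}` -/
  ord : ∀ {a a' : G}, a ≤ a' → (T a ⟶ T a')
  ord_refl : ∀ a : G, ord (le_refl a) = 𝟙 (T a)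
  ord_trans : ∀ {a a' a'' : G} (h : a ≤ a') (h' : a' ≤ a''), ord h ≫ ord h' = ord (h.trans h')
  left_unit : ∀ (a : G) (X : C),
    η.app ((T a).obj X) ≫ (μ 1 a).app X = eqToHom (by rw [one_mul]; rfl)
  right_unit : ∀ (a : G) (X : C),
    (T a).map (η.app X) ≫ (μ a 1).app X = eqToHom (by rw [mul_one]; rfl)
  assoc : ∀ (a b c : G) (X : C),
    (T a).map ((μ b c).app X) ≫ (μ a (b * c)).app X =
      (μ a b).app ((T c).obj X) ≫ (μ (a * b) c).app X ≫ eqToHom (by rw [mul_assoc])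
  μ_ord : ∀ {a a' b b' : G} (h : a ≤ a') (h' : b ≤ b') (X : C),
    (μ a b).app X ≫ (ord (mul_le_mul' h h')).app X =
      (T a).map ((ord h').app X) ≫ (ord h).app ((T b').obj X) ≫ (μ a' b').app X

variable [MonoidalCategory C]

/-- A strong pomonoid-graded monad: a graded monad with a graded strength. -/
structure StrongGradedMonad extends GradedMonad G C where
  /-- the graded strength -/
  τ : ∀ (a : G) (X Y : C), X ⊗ (T a).obj Y ⟶ (T a).obj (X ⊗ Y)
  τ_natural : ∀ (a : G) {X X' Y Y' : C} (f : X ⟶ X') (g : Y ⟶ Y'),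
    (f ⊗ₘ (T a).map g) ≫ τ a X' Y' = τ a X Y ≫ (T a).map (f ⊗ₘ g)
  τ_unitor : ∀ (a : G) (X : C),
    τ a (𝟙_ C) X ≫ (T a).map (λ_ X).hom = (λ_ ((T a).obj X)).hom
  τ_assoc : ∀ (a : G) (X Y Z : C),
    (α_ X Y ((T a).obj Z)).hom ≫ (𝟙 X ⊗ₘ τ a Y Z) ≫ τ a X (Y ⊗ Z) =
      τ a (X ⊗ Y) Z ≫ (T a).map (α_ X Y Z).hom
  τ_η : ∀ (X Y : C), (𝟙 X ⊗ₘ η.app Y) ≫ τ 1 X Y = η.app (X ⊗ Y)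
  τ_μ : ∀ (a b : G) (X Y : C),
    (𝟙 X ⊗ₘ (μ a b).app Y) ≫ τ (a * b) X Y =
      τ a X ((T b).obj Y) ≫ (T a).map (τ b X Y) ≫ (μ a b).app (X ⊗ Y)
  τ_ord : ∀ {a a' : G} (h : a ≤ a') (X Y : C),
    (𝟙 X ⊗ₘ (ord h).app Y) ≫ τ a' X Y = τ a X Y ≫ (ord h).app (X ⊗ Y)

variable {G C}

namespace StrongGradedMonad

variable [BraidedCategory C]

/-- The graded costrength `τ'^a_{X,Y} := T^a(γ) ∘ τ^a ∘ γ`. -/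
def costr (M : StrongGradedMonad G C) (a : G) (X Y : C) :
    (M.T a).obj X ⊗ Y ⟶ (M.T a).obj (X ⊗ Y) :=
  (β_ ((M.T a).obj X) Y).hom ≫ M.τ a Y X ≫ (M.T a).map (β_ Y X).hom

/-- A strong graded monad is commutative when the two double-strength maps agree
(for all gradations `a`, `b` for which `a * b = b * a`, so that the equation typechecks;
in particular if the grading pomonoid is commutative this is required for all pairs). -/
def IsCommutative (M : StrongGradedMonad G C) : Prop :=
  ∀ (a b : G) (h : a * b = b * a) (X Y : C),
    M.costr a X ((M.T b).obj Y) ≫ (M.T a).map (M.τ b X Y) ≫ (M.μ a b).app (X ⊗ Y) =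
      M.τ b ((M.T a).obj X) Y ≫ (M.T b).map (M.costr a X Y) ≫ (M.μ b a).app (X ⊗ Y) ≫
        eqToHom (by rw [h])

/-- A graded central cone of `M` at `(z, X)` (where `z` is central in `G`),
with apex `Z` and map `ι : Z ⟶ T^z X`. -/
def CentralCone (M : StrongGradedMonad G C) (z : G) (hz : ∀ b : G, z * b = b * z)
    (X Z : C) (ι : Z ⟶ (M.T z).obj X) : Prop :=
  ∀ (b : G) (Y : C),
    (ι ⊗ₘ 𝟙 ((M.T b).obj Y)) ≫ M.costr z X ((M.T b).obj Y) ≫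
        (M.T z).map (M.τ b X Y) ≫ (M.μ z b).app (X ⊗ Y) =
      (ι ⊗ₘ 𝟙 ((M.T b).obj Y)) ≫ M.τ b ((M.T z).obj X) Y ≫
        (M.T b).map (M.costr z X Y) ≫ (M.μ b z).app (X ⊗ Y) ≫ eqToHom (by rw [hz b])

/-- A terminal graded central cone at `(z, X)`: a graded central cone through which every
graded central cone at `(z, X)` factors uniquely. -/
def IsTerminalCentralCone (M : StrongGradedMonad G C) (z : G) (hz : ∀ b : G, z * b = b * z)
    (X Z : C) (ι : Z ⟶ (M.T z).obj X) : Prop :=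
  M.CentralCone z hz X Z ι ∧
    ∀ (W : C) (f : W ⟶ (M.T z).obj X), M.CentralCone z hz X W f →
      ∃! φ : W ⟶ Z, φ ≫ ι = f

/-- A strong graded monad is centralisable when it has a terminal graded central cone
at `(z, X)` for every central `z` and every object `X`. -/
def Centralisable (M : StrongGradedMonad G C) : Prop :=
  ∀ (z : G) (hz : ∀ b : G, z * b = b * z) (X : C),
    ∃ (Z : C) (ι : Z ⟶ (M.T z).obj X), M.IsTerminalCentralCone z hz X Z ι

end StrongGradedMonad

/-- Every element of the centre of a monoid commutes with every element. -/
def centerComm {G : Type*} [Monoid G] (z : Submonoid.center G) :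
    ∀ b : G, (z : G) * b = b * (z : G) :=
  fun b => (Submonoid.mem_center_iff.mp z.prop b).symm

section Aux

variable {G : Type*} [Monoid G] [PartialOrder G] [MulLeftMono G] [MulRightMono G]
variable {C : Type u} [Category.{v} C] [MonoidalCategory C] [BraidedCategory C]

lemma map_eqToHom_comm {D E : Type*} [Category D] [Category E] {F F' : D ⥤ E}
    (h : F = F') {X Y : D} (f : X ⟶ Y) (h1 : F.obj X = F'.obj X) (h2 : F.obj Y = F'.obj Y) :
    F.map f ≫ eqToHom h2 = eqToHom h1 ≫ F'.map f := by
  subst h; simp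

lemma costr_natural (M : StrongGradedMonad G C) (a : G)
    {X X' Y Y' : C} (f : X ⟶ X') (g : Y ⟶ Y') :
    ((M.T a).map f ⊗ₘ g) ≫ M.costr a X' Y' = M.costr a X Y ≫ (M.T a).map (f ⊗ₘ g) := by
  simp only [StrongGradedMonad.costr]
  rw [← Category.assoc, BraidedCategory.braiding_naturality, Category.assoc,
    reassoc_of% (M.τ_natural a g f), ← Functor.map_comp,
    BraidedCategory.braiding_naturality, Functor.map_comp]
  simp

lemma cone_pushforward (M : StrongGradedMonad G C) (z : G)
    (hz : ∀ b : G, z * b = b * z) {X Y : C} (f : X ⟶ Y) {W : C}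
    (ι' : W ⟶ (M.T z).obj X) (h : M.CentralCone z hz X W ι') :
    M.CentralCone z hz Y W (ι' ≫ (M.T z).map f) := by
  intro b Y'
  have hT : M.T (b * z) = M.T (z * b) := by rw [hz b]
  have htens : ((ι' ≫ (M.T z).map f) ⊗ₘ 𝟙 ((M.T b).obj Y'))
      = (ι' ⊗ₘ 𝟙 ((M.T b).obj Y')) ≫ ((M.T z).map f ⊗ₘ 𝟙 ((M.T b).obj Y')) := by
    rw [MonoidalCategory.tensorHom_comp_tensorHom, Category.comp_id]
  rw [htens]
  -- LHS computation
  have lhs1 : ((M.T z).map f ⊗ₘ 𝟙 ((M.T b).obj Y')) ≫ M.costr z Y ((M.T b).obj Y') ≫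
      (M.T z).map (M.τ b Y Y') ≫ (M.μ z b).app (Y ⊗ Y') =
      (M.costr z X ((M.T b).obj Y') ≫ (M.T z).map (M.τ b X Y') ≫
        (M.μ z b).app (X ⊗ Y')) ≫ (M.T (z * b)).map (f ⊗ₘ 𝟙 Y') := by
    have hτ : (f ⊗ₘ 𝟙 ((M.T b).obj Y')) ≫ M.τ b Y Y' =
        M.τ b X Y' ≫ (M.T b).map (f ⊗ₘ 𝟙 Y') := by
      have := M.τ_natural b f (𝟙 Y')
      simpa using this
    have hμ := (M.μ z b).naturality (f ⊗ₘ 𝟙 Y')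
    simp only [Functor.comp_map] at hμ
    rw [reassoc_of% (costr_natural M z f (𝟙 ((M.T b).obj Y')))]
    rw [← Functor.map_comp_assoc, hτ, Functor.map_comp_assoc, hμ]
    simp
  -- RHS computation
  have rhs1 : ((M.T z).map f ⊗ₘ 𝟙 ((M.T b).obj Y')) ≫ M.τ b ((M.T z).obj Y) Y' ≫
      (M.T b).map (M.costr z Y Y') ≫ (M.μ b z).app (Y ⊗ Y') ≫
        eqToHom (show (M.T (b * z)).obj (Y ⊗ Y') = (M.T (z * b)).obj (Y ⊗ Y') by rw [hz b]) =
      (M.τ b ((M.T z).obj X) Y' ≫ (M.T b).map (M.costr z X Y') ≫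
        (M.μ b z).app (X ⊗ Y') ≫
        eqToHom (show (M.T (b * z)).obj (X ⊗ Y') = (M.T (z * b)).obj (X ⊗ Y') by rw [hz b]))
        ≫ (M.T (z * b)).map (f ⊗ₘ 𝟙 Y') := by
    have hτ : ((M.T z).map f ⊗ₘ 𝟙 ((M.T b).obj Y')) ≫ M.τ b ((M.T z).obj Y) Y' =
        M.τ b ((M.T z).obj X) Y' ≫ (M.T b).map ((M.T z).map f ⊗ₘ 𝟙 Y') := by
      have := M.τ_natural b ((M.T z).map f) (𝟙 Y')
      simpa using this
    have hμ := (M.μ b z).naturality (f ⊗ₘ 𝟙 Y')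
    simp only [Functor.comp_map] at hμ
    rw [reassoc_of% hτ, ← Functor.map_comp_assoc, costr_natural M z f (𝟙 Y'),
      Functor.map_comp_assoc, reassoc_of% hμ,
      map_eqToHom_comm hT (f ⊗ₘ 𝟙 Y') (by rw [hz b]) (by rw [hz b])]
    simp
  rw [Category.assoc, Category.assoc, lhs1, rhs1]
  simp only [Category.assoc]
  rw [reassoc_of% (h b Y')]

end Aux

open StrongGradedMonad in
/-- For a centralisable strong graded monad with terminal graded central cones
`(Zc z X, ι z X)`, every `f : X ⟶ Y` induces a unique `Z^z f` commuting with the cone maps,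
and this assignment is functorial (making `ι^z` natural). -/
theorem centre_functorial
    {G : Type*} [Monoid G] [PartialOrder G] [MulLeftMono G] [MulRightMono G]
    {C : Type u} [Category.{v} C] [MonoidalCategory C] [SymmetricCategory C]
    (M : StrongGradedMonad G C)
    (Zc : Submonoid.center G → C → C)
    (ι : ∀ (z : Submonoid.center G) (X : C), Zc z X ⟶ (M.T (z : G)).obj X)
    (hterm : ∀ (z : Submonoid.center G) (X : C),
      M.IsTerminalCentralCone (z : G) (centerComm z) X (Zc z X) (ι z X))
    (z : Submonoid.center G) :
    (∀ {X Y : C} (f : X ⟶ Y),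
      ∃! φ : Zc z X ⟶ Zc z Y, φ ≫ ι z Y = ι z X ≫ (M.T (z : G)).map f) ∧
    ∃ Fmap : ∀ (X Y : C), (X ⟶ Y) → (Zc z X ⟶ Zc z Y),
      (∀ (X Y : C) (f : X ⟶ Y), Fmap X Y f ≫ ι z Y = ι z X ≫ (M.T (z : G)).map f) ∧
      (∀ X : C, Fmap X X (𝟙 X) = 𝟙 (Zc z X)) ∧
      (∀ (X Y W : C) (f : X ⟶ Y) (g : Y ⟶ W), Fmap X W (f ≫ g) = Fmap X Y f ≫ Fmap Y W g) := by
  have key : ∀ {X Y : C} (f : X ⟶ Y),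
      ∃! φ : Zc z X ⟶ Zc z Y, φ ≫ ι z Y = ι z X ≫ (M.T (z : G)).map f := by
    intro X Y f
    exact (hterm z Y).2 _ _ (cone_pushforward M (z : G) (centerComm z) f (ι z X) (hterm z X).1)
  refine ⟨fun f => key f, fun X Y f => (key f).exists.choose, fun X Y f => (key f).exists.choose_spec, ?_, ?_⟩
  · intro X
    have h1 := (key (𝟙 X)).exists.choose_spec
    have h2 : (𝟙 (Zc z X)) ≫ ι z X = ι z X ≫ (M.T (z : G)).map (𝟙 X) := by simp
    exact (key (𝟙 X)).unique h1 h2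
  · intro X Y W f g
    have h1 := (key (f ≫ g)).exists.choose_spec
    have hf := (key f).exists.choose_spec
    have hg := (key g).exists.choose_spec
    have h2 : ((key f).exists.choose ≫ (key g).exists.choose) ≫ ι z W =
        ι z X ≫ (M.T (z : G)).map (f ≫ g) := by
      rw [Category.assoc, hg, reassoc_of% hf, Functor.map_comp]
    exact (key (f ≫ g)).unique h1 h2
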